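/- Lempel factorization consequence: every symmetric n×n matrix A over GF(2) of rank r can be written as A = F F^T where F is n×r' with r' = r if some diagonal entry of A is nonzero or A's rank condition permits, and r' = r + 1 otherwise; in particular r' ≤ r + 1 always suffices. -/

import Mathlib

set_option linter.unusedSectionVars false
set_option linter.unusedVariables false
set_option maxHeartbeats 1000000

open Matrix

namespace Lempel

variable {m : Type} [Fintype m] [DecidableEq m]

local notation "K" => ZMod 2

lemma kadd (a : K) : a + a = 0 := by revert a; decide

lemma kcancel (a b : K) : (a + b) + b = a := by revert a b; decide

lemma zmodone {a : K} (h : a ≠ 0) : a = 1 := by revert a; decide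

lemma cancelM2 (X Y : Matrix m m K) : (X + Y) + Y = X := by
  ext i j; exact kcancel _ _

lemma vadd (v : m → K) : v + v = 0 := by ext i; exact kadd _

lemma vecMulVec_isSymm (v : m → K) : (vecMulVec v v).IsSymm :=
  Matrix.IsSymm.ext fun i j => mul_comm _ _

lemma isSymm_add {X Y : Matrix m m K} (hX : X.IsSymm) (hY : Y.IsSymm) : (X + Y).IsSymm := by
  rw [Matrix.IsSymm, Matrix.transpose_add, hX.eq, hY.eq]

lemma isSymm_vmv2 {X : Matrix m m K} (hX : X.IsSymm) (u w : m → K) :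
    (X + vecMulVec u w + vecMulVec w u).IsSymm := by
  rw [Matrix.IsSymm, Matrix.transpose_add, Matrix.transpose_add, hX.eq]
  ext i j
  simp [Matrix.add_apply, vecMulVec_apply, Matrix.transpose_apply]
  ring

lemma single_dot (f : m → K) (i : m) : Pi.single i 1 ⬝ᵥ f = f i := by
  simp [dotProduct, Pi.single_apply]

lemma dot_single (f : m → K) (i : m) : f ⬝ᵥ Pi.single i 1 = f i := by
  simp [dotProduct, Pi.single_apply]

/-- cons a column onto a matrix -/
def consCol (v : m → K) {r : ℕ} (F : Matrix m (Fin r) K) : Matrix m (Fin (r+1)) K :=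
  Matrix.of fun i => Fin.cons (v i) (F i)

lemma consCol_mul_transpose (v : m → K) {r : ℕ} (F : Matrix m (Fin r) K) :
    consCol v F * (consCol v F)ᵀ = vecMulVec v v + F * Fᵀ := by
  ext i j
  simp [consCol, mul_apply, Fin.sum_univ_succ, vecMulVec_apply]

lemma mulVec_vecMulVec (u w g : m → K) :
    (vecMulVec u w).mulVec g = (w ⬝ᵥ g) • u := by
  ext i
  simp [vecMulVec_apply, mulVec, dotProduct, Finset.mul_sum, mul_assoc, mul_comm, mul_left_comm]

lemma dot_mulVec_symm {A : Matrix m m K} (hA : A.IsSymm) (y g : m → K) :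
    (A.mulVec y) ⬝ᵥ g = y ⬝ᵥ (A.mulVec g) := by
  simp only [mulVec, dotProduct, Finset.sum_mul, Finset.mul_sum]
  rw [Finset.sum_comm]
  refine Finset.sum_congr rfl fun j _ => Finset.sum_congr rfl fun i _ => ?_
  rw [← hA.apply i j]
  ring

lemma rank_vecMulVec_le (u w : m → K) : (vecMulVec u w).rank ≤ 1 := by
  rw [vecMulVec_eq (Fin 1)]
  exact (Matrix.rank_mul_le_right _ _).trans ((Matrix.rank_le_card_height _).trans (by simp))

lemma rank_add_le' (A B : Matrix m m K) : (A + B).rank ≤ A.rank + B.rank := by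
  have h : LinearMap.range (A + B).mulVecLin ≤
      LinearMap.range A.mulVecLin ⊔ LinearMap.range B.mulVecLin := by
    rintro x ⟨v, rfl⟩
    have : (A + B).mulVecLin v = A.mulVecLin v + B.mulVecLin v := by
      simp [Matrix.add_mulVec]
    rw [this]
    exact Submodule.add_mem_sup ⟨v, rfl⟩ ⟨v, rfl⟩
  calc (A + B).rank
      ≤ Module.finrank (ZMod 2)
        ↥(LinearMap.range A.mulVecLin ⊔ LinearMap.range B.mulVecLin) :=
        Submodule.finrank_mono h
    _ ≤ A.rank + B.rank := Submodule.finrank_add_le_finrank_add_finrank _ _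

lemma rank_nullity (A : Matrix m m K) :
    A.rank + Module.finrank (ZMod 2) (LinearMap.ker A.mulVecLin) = Fintype.card m := by
  have h := LinearMap.finrank_range_add_finrank_ker A.mulVecLin
  rw [Module.finrank_pi] at h
  exact h

lemma rank_drop1 {A A' : Matrix m m K} (x : m → K)
    (hker : ∀ y, A.mulVec y = 0 → A'.mulVec y = 0)
    (hx0 : A'.mulVec x = 0) (hxne : A.mulVec x ≠ 0) :
    A'.rank + 1 ≤ A.rank := by
  have h1 : LinearMap.ker A.mulVecLin < LinearMap.ker A'.mulVecLin := by
    rw [SetLike.lt_iff_le_and_exists]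
    refine ⟨fun p hp => ?_, x, ?_, ?_⟩
    · rw [LinearMap.mem_ker] at hp ⊢
      exact hker p hp
    · rw [LinearMap.mem_ker, mulVecLin_apply]; exact hx0
    · rw [LinearMap.mem_ker, mulVecLin_apply]; exact hxne
  have h2 := Submodule.finrank_lt_finrank_of_lt h1
  have h3 := rank_nullity A
  have h4 := rank_nullity A'
  omega

lemma rank_drop2 {A' A'' : Matrix m m K} (y z : m → K)
    (hker : ∀ g, A'.mulVec g = 0 → A''.mulVec g = 0)
    (hy : A''.mulVec y = 0) (hz : A''.mulVec z = 0)
    (hyne : A'.mulVec y ≠ 0)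
    (hznot : ∀ (p : m → K) (c : K), A'.mulVec p = 0 → z ≠ p + c • y) :
    A''.rank + 2 ≤ A'.rank := by
  set K0 := LinearMap.ker A'.mulVecLin with hK0
  set K1 := K0 ⊔ Submodule.span (ZMod 2) {y} with hK1
  have h01 : K0 < K1 := by
    rw [SetLike.lt_iff_le_and_exists]
    refine ⟨le_sup_left, y, Submodule.mem_sup_right (Submodule.mem_span_singleton_self y), ?_⟩
    rw [hK0, LinearMap.mem_ker, mulVecLin_apply]; exact hyne
  have h12 : K1 < LinearMap.ker A''.mulVecLin := by
    rw [SetLike.lt_iff_le_and_exists]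
    refine ⟨sup_le (fun p hp => ?_) ?_, z, ?_, ?_⟩
    · rw [LinearMap.mem_ker, mulVecLin_apply]
      rw [hK0, LinearMap.mem_ker, mulVecLin_apply] at hp
      exact hker p hp
    · rw [Submodule.span_singleton_le_iff_mem, LinearMap.mem_ker, mulVecLin_apply]
      exact hy
    · rw [LinearMap.mem_ker, mulVecLin_apply]; exact hz
    · intro hmem
      rw [hK1] at hmem
      obtain ⟨p, hp, q, hq, hpq⟩ := Submodule.mem_sup.mp hmem
      obtain ⟨c, rfl⟩ := Submodule.mem_span_singleton.mp hq
      rw [hK0, LinearMap.mem_ker, mulVecLin_apply] at hp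
      exact hznot p c hp hpq.symm
  have h2 := Submodule.finrank_lt_finrank_of_lt h01
  have h3 := Submodule.finrank_lt_finrank_of_lt h12
  have h4 := rank_nullity A'
  have h5 := rank_nullity A''
  rw [← hK0] at h4
  omega

lemma id_czero (a p r p' r' : K) :
    ((a + r*p') + p*r') + (p+r)*(p'+r') = p*p' + (r*r' + a) := by
  revert a p r p' r'; decide

lemma id_main (a p q r p' q' r' : K) :
    ((a + r*p') + p*r') + q*q' =
      (p+q)*(p'+q') + ((r+q)*(r'+q') + ((p+q+r)*(p'+q'+r') + a)) := by
  revert a p q r p' q' r'; decide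

/-- Core lemma: a symmetric matrix over GF(2) whose associated quadratic form is
nontrivial factors as `F * Fᵀ` with at most `rank` columns. -/
lemma core (k : ℕ) (A : Matrix m m K) (hA : A.IsSymm) (hrk : A.rank ≤ k)
    (hwit : ∃ x, x ⬝ᵥ A.mulVec x = 1) :
    ∃ (r' : ℕ) (F : Matrix m (Fin r') K), r' ≤ A.rank ∧ A = F * Fᵀ := by
  induction k using Nat.strong_induction_on generalizing A with
  | _ k IH =>
  obtain ⟨x, hx⟩ := hwit
  set v := A.mulVec x with hv
  set A' := A + vecMulVec v v with hA'def
  have hA'symm : A'.IsSymm := isSymm_add hA (vecMulVec_isSymm v)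
  have hxv : x ⬝ᵥ v = 1 := hx
  have hkvA : ∀ y, A.mulVec y = 0 → A'.mulVec y = 0 := by
    intro y hy
    rw [hA'def, add_mulVec, hy, zero_add, mulVec_vecMulVec]
    have h0 : v ⬝ᵥ y = 0 := by
      rw [hv, dot_mulVec_symm hA x y, hy, dotProduct_zero]
    rw [h0, zero_smul]
  have hx0 : A'.mulVec x = 0 := by
    rw [hA'def, add_mulVec, mulVec_vecMulVec]
    have hvx : v ⬝ᵥ x = 1 := by rw [dotProduct_comm]; exact hxv
    rw [hvx, one_smul, ← hv, vadd]
  have hxne : A.mulVec x ≠ 0 := by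
    intro h
    rw [← hv] at h
    rw [h, dotProduct_zero] at hxv
    exact one_ne_zero hxv.symm
  have hAeq : A = A' + vecMulVec v v := by
    rw [hA'def, cancelM2]
  have hdrop1 : A'.rank + 1 ≤ A.rank := rank_drop1 x hkvA hx0 (by rw [← hv]; exact hxne)
  by_cases hw : ∃ x', x' ⬝ᵥ A'.mulVec x' = 1
  · obtain ⟨r'', F', hr'', hF'⟩ := IH A'.rank (by omega) A' hA'symm le_rfl hw
    refine ⟨r'' + 1, consCol v F', by omega, ?_⟩
    rw [consCol_mul_transpose, ← hF', add_comm, ← hAeq]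
  · push_neg at hw
    have halt : ∀ g, g ⬝ᵥ A'.mulVec g = 0 := by
      intro g
      have h1 := hw g
      revert h1
      generalize (g ⬝ᵥ A'.mulVec g) = t
      revert t; decide
    by_cases hzero : A' = 0
    · refine ⟨1, consCol v (Matrix.of fun i => ![]), by omega, ?_⟩
      rw [consCol_mul_transpose]
      have h0 : (Matrix.of fun (i : m) => (![] : Fin 0 → K)) *
          (Matrix.of fun (i : m) => (![] : Fin 0 → K))ᵀ = 0 := by
        ext i j; simp [mul_apply]
      rw [h0, add_zero, hAeq, hzero, zero_add]
    · have hex : ∃ a b, A' a b ≠ 0 := by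
        by_contra h
        push_neg at h
        exact hzero (by ext i j; simpa using h i j)
      obtain ⟨ia, ib, hab⟩ := hex
      set y : m → K := Pi.single ia 1 with hy
      set z : m → K := Pi.single ib 1 with hz
      set u := A'.mulVec y with hu
      set w := A'.mulVec z with hwdef
      have hyw : y ⬝ᵥ w = 1 := by
        rw [hwdef, hy, single_dot]
        have : A'.mulVec z ia = A' ia ib := by
          rw [hz]
          simp [mulVec, dot_single]
        rw [this]
        exact zmodone hab
      have hyu : y ⬝ᵥ u = 0 := by rw [hu]; exact halt y
      have hzw : z ⬝ᵥ w = 0 := by rw [hwdef]; exact halt z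
      have hzu : z ⬝ᵥ u = 1 := by
        rw [hu, ← dot_mulVec_symm hA'symm z y, ← hwdef, dotProduct_comm]
        exact hyw
      set A'' := A' + vecMulVec u w + vecMulVec w u with hA''def
      have hA''symm : A''.IsSymm := isSymm_vmv2 hA'symm u w
      have hmv'' : ∀ g, A''.mulVec g =
          A'.mulVec g + (w ⬝ᵥ g) • u + (u ⬝ᵥ g) • w := by
        intro g
        rw [hA''def, add_mulVec, add_mulVec, mulVec_vecMulVec, mulVec_vecMulVec]
      have hker2 : ∀ g, A'.mulVec g = 0 → A''.mulVec g = 0 := by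
        intro g hg
        have hwg : w ⬝ᵥ g = 0 := by
          rw [hwdef, dot_mulVec_symm hA'symm z g, hg, dotProduct_zero]
        have hug : u ⬝ᵥ g = 0 := by
          rw [hu, dot_mulVec_symm hA'symm y g, hg, dotProduct_zero]
        rw [hmv'' g, hg, hwg, hug, zero_smul, zero_smul, add_zero, add_zero]
      have hy2 : A''.mulVec y = 0 := by
        have hwy : w ⬝ᵥ y = 1 := by rw [dotProduct_comm]; exact hyw
        have huy : u ⬝ᵥ y = 0 := by rw [dotProduct_comm]; exact hyu
        rw [hmv'' y, ← hu, hwy, huy, one_smul, zero_smul, add_zero, vadd]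
      have hz2 : A''.mulVec z = 0 := by
        have hwz : w ⬝ᵥ z = 0 := by rw [dotProduct_comm]; exact hzw
        have huz : u ⬝ᵥ z = 1 := by rw [dotProduct_comm]; exact hzu
        rw [hmv'' z, ← hwdef, hwz, huz, one_smul, zero_smul, add_zero, vadd]
      have hyne2 : A'.mulVec y ≠ 0 := by
        intro h
        rw [← hu] at h
        rw [h, dotProduct_zero] at hzu
        exact one_ne_zero hzu.symm
      have hznot : ∀ (p : m → K) (c : K), A'.mulVec p = 0 → z ≠ p + c • y := by
        intro p c hp heq
        have hweq : w = c • u := by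
          rw [hwdef, heq, mulVec_add, hp, zero_add, mulVec_smul, ← hu]
        have hc : c = 0 := by
          have := hzw
          rw [hweq, dotProduct_smul, hzu, smul_eq_mul, mul_one] at this
          exact this
        rw [hc, zero_smul] at hweq
        rw [hweq, dotProduct_zero] at hyw
        exact one_ne_zero hyw.symm
      have hdrop2 : A''.rank + 2 ≤ A'.rank := rank_drop2 y z hker2 hy2 hz2 hyne2 hznot
      have haltA'' : ∀ g, g ⬝ᵥ A''.mulVec g = 0 := by
        intro g
        rw [hmv'' g, dotProduct_add, dotProduct_add, halt g, zero_add,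
          dotProduct_smul, dotProduct_smul, smul_eq_mul, smul_eq_mul,
          dotProduct_comm g u, dotProduct_comm g w, mul_comm (w ⬝ᵥ g)]
        exact kadd _
      -- master decomposition of A
      have hA'eq : A' = (A'' + vecMulVec w u) + vecMulVec u w := by
        rw [hA''def, cancelM2, cancelM2]
      have hAsplit : A = ((A'' + vecMulVec w u) + vecMulVec u w) + vecMulVec v v := by
        rw [← hA'eq, ← hAeq]
      by_cases hc : u + v + w = 0
      · -- v = u + w
        have hveq : ∀ i, v i = u i + w i := by
          intro i
          have h1 : u i + v i + w i = 0 := by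
            have := congrFun hc i; simpa using this
          revert h1
          generalize u i = a; generalize v i = b; generalize w i = cc
          revert a b cc; decide
        set C' := vecMulVec w w + A'' with hC'def
        have hC'symm : C'.IsSymm := isSymm_add (vecMulVec_isSymm w) hA''symm
        have hwy : w ⬝ᵥ y = 1 := by rw [dotProduct_comm]; exact hyw
        have hwitC' : y ⬝ᵥ C'.mulVec y = 1 := by
          rw [hC'def, add_mulVec, mulVec_vecMulVec, dotProduct_add, haltA'' y, add_zero]
          rw [dotProduct_smul, smul_eq_mul, hwy, hyw, one_mul]
        have hrkC' : C'.rank ≤ 1 + A''.rank := by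
          have h1 := rank_add_le' (vecMulVec w w) A''
          have h2 := rank_vecMulVec_le w w
          rw [hC'def]
          omega
        obtain ⟨r'', F'', hr'', hF''⟩ := IH C'.rank (by omega) C' hC'symm le_rfl ⟨y, hwitC'⟩
        refine ⟨r'' + 1, consCol u F'', by omega, ?_⟩
        rw [consCol_mul_transpose, ← hF'', hC'def, hAsplit]
        ext i j
        simp only [Matrix.add_apply, vecMulVec_apply]
        rw [hveq i, hveq j]
        exact id_czero (A'' i j) (u i) (w i) (u j) (w j)
      · have hex0 : ∃ i, (u + v + w) i ≠ 0 := by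
          by_contra h
          push_neg at h
          exact hc (funext fun i => h i)
        obtain ⟨i0, hi0⟩ := hex0
        set cv := u + v + w with hcv
        set g : m → K := Pi.single i0 1 with hg
        set C := vecMulVec cv cv + A'' with hCdef
        have hCsymm : C.IsSymm := isSymm_add (vecMulVec_isSymm cv) hA''symm
        have hcv1 : cv i0 = 1 := zmodone hi0
        have hwitC : g ⬝ᵥ C.mulVec g = 1 := by
          rw [hCdef, add_mulVec, mulVec_vecMulVec, dotProduct_add, haltA'' g, add_zero]
          rw [dotProduct_smul, smul_eq_mul, hg, dot_single, single_dot, hcv1, one_mul]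
        have hrkC : C.rank ≤ 1 + A''.rank := by
          have h1 := rank_add_le' (vecMulVec cv cv) A''
          have h2 := rank_vecMulVec_le cv cv
          rw [hCdef]
          omega
        obtain ⟨r'', F'', hr'', hF''⟩ := IH C.rank (by omega) C hCsymm le_rfl ⟨g, hwitC⟩
        refine ⟨r'' + 2, consCol (u + v) (consCol (w + v) F''), by omega, ?_⟩
        rw [consCol_mul_transpose, consCol_mul_transpose, ← hF'', hCdef, hAsplit]
        ext i j
        simp only [Matrix.add_apply, vecMulVec_apply, Pi.add_apply]
        exact id_main (A'' i j) (u i) (v i) (w i) (u j) (v j) (w j)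

end Lempel



open Lempel in
/-- Lempel factorization: every symmetric matrix `A` over GF(2) can be
written as `A = F Fᵀ` with `F` having `r' ≤ rank(A) + 1` columns. -/
theorem lempel_factorization (n : ℕ) (A : Matrix (Fin n) (Fin n) (ZMod 2))
    (hA : A.IsSymm) :
    ∃ (r' : ℕ) (F : Matrix (Fin n) (Fin r') (ZMod 2)),
      r' ≤ A.rank + 1 ∧ A = F * F.transpose := by
  set B : Matrix (Fin n ⊕ Fin 1) (Fin n ⊕ Fin 1) (ZMod 2) :=
    fromBlocks A 0 0 (1 : Matrix (Fin 1) (Fin 1) (ZMod 2)) with hB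
  have hBsymm : B.IsSymm := by
    rw [Matrix.IsSymm, hB, fromBlocks_transpose]
    simp [hA.eq]
  set xB : Fin n ⊕ Fin 1 → ZMod 2 := Pi.single (Sum.inr 0) 1 with hxB
  have hmvsingle : ∀ (M : Matrix (Fin n ⊕ Fin 1) (Fin n ⊕ Fin 1) (ZMod 2)) i j,
      M.mulVec (Pi.single j 1) i = M i j := by
    intro M i j
    simp [mulVec, dot_single]
  have hwit : xB ⬝ᵥ B.mulVec xB = 1 := by
    rw [hxB, single_dot, hmvsingle]
    rw [hB]
    simp [fromBlocks]
  have hrkB : B.rank ≤ A.rank + 1 := by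
    have hsplit : B = fromBlocks A 0 0 0 + fromBlocks 0 0 0 1 := by
      rw [fromBlocks_add]
      simp
      exact hB
    have h1 : (fromBlocks A 0 0 (0 : Matrix (Fin 1) (Fin 1) (ZMod 2))).rank ≤ A.rank := by
      have he : fromBlocks A 0 0 (0 : Matrix (Fin 1) (Fin 1) (ZMod 2)) =
          (fromRows (1 : Matrix (Fin n) (Fin n) (ZMod 2)) (0 : Matrix (Fin 1) (Fin n) (ZMod 2)) * A) *
            fromCols (1 : Matrix (Fin n) (Fin n) (ZMod 2)) (0 : Matrix (Fin n) (Fin 1) (ZMod 2)) := by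
        rw [fromRows_mul, fromRows_mul_fromCols]
        simp
      rw [he]
      exact (Matrix.rank_mul_le_left _ _).trans (Matrix.rank_mul_le_right _ _)
    have h2 : (fromBlocks (0 : Matrix (Fin n) (Fin n) (ZMod 2)) 0 0
        (1 : Matrix (Fin 1) (Fin 1) (ZMod 2))).rank ≤ 1 := by
      have he : fromBlocks (0 : Matrix (Fin n) (Fin n) (ZMod 2)) 0 0
          (1 : Matrix (Fin 1) (Fin 1) (ZMod 2)) = vecMulVec xB xB := by
        ext (i | i) (j | j) <;>
          simp [vecMulVec_apply, hxB, Pi.single_apply, fromBlocks, Fin.eq_zero]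
      rw [he]
      exact Lempel.rank_vecMulVec_le _ _
    calc B.rank ≤ (fromBlocks A 0 0 0).rank + (fromBlocks 0 0 0 1).rank := by
          rw [hsplit] at *; exact rank_add_le' _ _
      _ ≤ A.rank + 1 := by omega
  obtain ⟨r', Q, hr', hQ⟩ := core (A.rank + 1) B hBsymm hrkB ⟨xB, hwit⟩
  refine ⟨r', Q.submatrix Sum.inl id, by omega, ?_⟩
  ext i j
  have : A i j = B (Sum.inl i) (Sum.inl j) := by rw [hB]; simp [fromBlocks]
  rw [this, hQ]
  simp [mul_apply, Matrix.submatrix_apply]
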